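/- The function L(ω) = π + i log(A_-(ω)/A_+(ω)) is real-valued and real analytic on ℝ, and L(0) = π/3. -/

import Mathlib

open Complex Real

/-- `Ai` is the Airy function: the unique entire solution of `Ai'' z = z * Ai z`
with the standard initial values. -/
def IsAiry (Ai : ℂ → ℂ) : Prop :=
  Differentiable ℂ Ai ∧ Differentiable ℂ (deriv Ai) ∧
  (∀ z : ℂ, deriv (deriv Ai) z = z * Ai z) ∧
  Ai 0 = 1 / ((3 : ℂ) ^ ((2 : ℂ) / 3) * Complex.Gamma (2 / 3)) ∧
  deriv Ai 0 = -(1 / ((3 : ℂ) ^ ((1 : ℂ) / 3) * Complex.Gamma (1 / 3)))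

section Helpers

/-- Iterated derivatives of an entire function are differentiable. -/
lemma entire_iteratedDeriv_diff {f : ℂ → ℂ} (hf : Differentiable ℂ f) (k : ℕ) :
    Differentiable ℂ (iteratedDeriv k f) :=
  (hf.contDiff (n := (⊤ : WithTop ℕ∞))).differentiable_iteratedDeriv k
    (by exact_mod_cast WithTop.coe_lt_top _)

/-- Leibniz rule for `z * f z`. -/
lemma iteratedDeriv_id_mul {f : ℂ → ℂ} (hf : Differentiable ℂ f) (n : ℕ) (z : ℂ) :
    iteratedDeriv (n + 1) (fun w => w * f w) z =
      (n + 1 : ℂ) * iteratedDeriv n f z + z * iteratedDeriv (n + 1) f z := by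
  induction n generalizing z with
  | zero =>
      rw [show (1 : ℕ) = 0 + 1 from rfl, iteratedDeriv_succ, iteratedDeriv_zero]
      have h1 : HasDerivAt (fun w : ℂ => w * f w) (1 * f z + z * deriv f z) z :=
        (hasDerivAt_id z).mul (hf z).hasDerivAt
      rw [h1.deriv, iteratedDeriv_succ, iteratedDeriv_zero]
      ring
  | succ n ih =>
      have hd : ∀ k : ℕ, Differentiable ℂ (iteratedDeriv k f) := entire_iteratedDeriv_diff hf
      have hEq : iteratedDeriv (n + 1) (fun w => w * f w) =
          fun z => (n + 1 : ℂ) * iteratedDeriv n f z + z * iteratedDeriv (n + 1) f z :=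
        funext ih
      rw [iteratedDeriv_succ, hEq]
      have h1 : HasDerivAt
          (fun z : ℂ => (n + 1 : ℂ) * iteratedDeriv n f z + z * iteratedDeriv (n + 1) f z)
          ((n + 1 : ℂ) * iteratedDeriv (n + 1) f z +
            (1 * iteratedDeriv (n + 1) f z + z * iteratedDeriv (n + 2) f z)) z := by
        have ha : HasDerivAt (fun z : ℂ => iteratedDeriv n f z) (iteratedDeriv (n + 1) f z) z := by
          rw [iteratedDeriv_succ]; exact (hd n z).hasDerivAt
        have hb : HasDerivAt (fun z : ℂ => iteratedDeriv (n + 1) f z)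
            (iteratedDeriv (n + 2) f z) z := by
          have hb' := (hd (n + 1) z).hasDerivAt
          rwa [← iteratedDeriv_succ] at hb'
        exact (ha.const_mul _).add ((hasDerivAt_id z).mul hb)
      rw [h1.deriv]
      push_cast
      ring

/-- All iterated derivatives of the Airy function at `0` are real (fixed by conjugation). -/
lemma airy_iteratedDeriv_real {Ai : ℂ → ℂ} (hAi : IsAiry Ai) (n : ℕ) :
    (starRingEnd ℂ) (iteratedDeriv n Ai 0) = iteratedDeriv n Ai 0 := by
  obtain ⟨hd, hd2, hode, h0, h1⟩ := hAi
  induction n using Nat.strong_induction_on with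
  | _ n IH =>
    match n with
    | 0 =>
        rw [iteratedDeriv_zero, h0]
        have hg : Complex.Gamma (2 / 3) = ((Real.Gamma (2 / 3) : ℝ) : ℂ) := by
          rw [← Complex.Gamma_ofReal]; norm_num
        have hp : (3 : ℂ) ^ ((2 : ℂ) / 3) = (((3 : ℝ) ^ ((2 : ℝ) / 3) : ℝ) : ℂ) := by
          rw [Complex.ofReal_cpow (by norm_num)]; norm_num
        rw [hg, hp]
        simp [← Complex.ofReal_mul, ← Complex.ofReal_one, ← Complex.ofReal_div]
    | 1 =>
        rw [iteratedDeriv_one, h1]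
        have hg : Complex.Gamma (1 / 3) = ((Real.Gamma (1 / 3) : ℝ) : ℂ) := by
          rw [← Complex.Gamma_ofReal]; norm_num
        have hp : (3 : ℂ) ^ ((1 : ℂ) / 3) = (((3 : ℝ) ^ ((1 : ℝ) / 3) : ℝ) : ℂ) := by
          rw [Complex.ofReal_cpow (by norm_num)]; norm_num
        rw [hg, hp]
        simp [← Complex.ofReal_mul, ← Complex.ofReal_one, ← Complex.ofReal_div, ← Complex.ofReal_neg]
    | (m + 2) =>
        have e1 : iteratedDeriv (m + 2) Ai 0 = iteratedDeriv m (fun z => z * Ai z) 0 := by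
          rw [show m + 2 = (m + 1) + 1 from rfl, iteratedDeriv_succ', iteratedDeriv_succ']
          congr 1
          exact funext hode
        match m with
        | 0 => simp [e1]
        | k + 1 =>
            rw [e1, iteratedDeriv_id_mul hd k 0]
            simp only [zero_mul, add_zero, map_mul]
            rw [IH k (by omega)]
            congr 1
            simp [Complex.conj_natCast]

/-- Hermitian symmetry of the Airy function: `Ai (conj z) = conj (Ai z)`. -/
lemma airy_conj {Ai : ℂ → ℂ} (hAi : IsAiry Ai) (z : ℂ) :
    Ai ((starRingEnd ℂ) z) = (starRingEnd ℂ) (Ai z) := by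
  have hd := hAi.1
  have h1 := Complex.hasSum_taylorSeries_of_entire hd 0 z
  have h2 := Complex.hasSum_taylorSeries_of_entire hd 0 ((starRingEnd ℂ) z)
  simp only [sub_zero] at h1 h2
  have h3 : HasSum (fun n : ℕ => (starRingEnd ℂ)
      ((Nat.factorial n : ℂ)⁻¹ • ((starRingEnd ℂ) z) ^ n • iteratedDeriv n Ai 0))
      ((starRingEnd ℂ) (Ai ((starRingEnd ℂ) z))) :=
    h2.map (starRingEnd ℂ).toAddMonoidHom Complex.continuous_conj
  have h4 : (fun n : ℕ => (starRingEnd ℂ)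
      ((Nat.factorial n : ℂ)⁻¹ • ((starRingEnd ℂ) z) ^ n • iteratedDeriv n Ai 0)) =
      fun n : ℕ => (Nat.factorial n : ℂ)⁻¹ • z ^ n • iteratedDeriv n Ai 0 := by
    funext n
    simp only [smul_eq_mul, map_mul, map_inv₀, map_pow, Complex.conj_conj,
      Complex.conj_natCast, airy_iteratedDeriv_real hAi n]
  rw [h4] at h3
  have := h3.unique h1
  rw [← this, Complex.conj_conj]

end Helpers

/-- There is a real-valued, real analytic branch `L` of `π + i log(A₋/A₊)` on `ℝ`
(i.e. `A₋(ω) = A₊(ω) e^{i(π - L ω)}` for all real `ω`), with `L 0 = π/3`. -/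
theorem stmt2 (Ai : ℂ → ℂ) (hAi : IsAiry Ai) :
    ∃ L : ℝ → ℝ, AnalyticOnNhd ℝ L Set.univ ∧ L 0 = π / 3 ∧
      ∀ ω : ℝ,
        Complex.exp (↑π * I / 3) * Ai (Complex.exp (↑π * I / 3) * ω) =
          Complex.exp (-(↑π * I) / 3) * Ai (Complex.exp (-(↑π * I) / 3) * ω) *
            Complex.exp (I * (↑π - (L ω : ℂ))) := by
  have hIs := hAi
  obtain ⟨hd1, hd2, hode, h0, h1⟩ := hAi
  set cp := Complex.exp (↑π * I / 3) with hcp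
  set cm := Complex.exp (-(↑π * I) / 3) with hcm
  have hcp0 : cp ≠ 0 := Complex.exp_ne_zero _
  have hcm0 : cm ≠ 0 := Complex.exp_ne_zero _
  have hconj_cm : (starRingEnd ℂ) cm = cp := by
    rw [hcm, hcp, ← Complex.exp_conj]
    congr 1
    simp [map_div₀, map_ofNat]
  have hconj_cp : (starRingEnd ℂ) cp = cm := by
    rw [← hconj_cm, Complex.conj_conj]
  have hcp3 : cp ^ 3 = -1 := by
    rw [hcp, ← Complex.exp_nat_mul, show ((3 : ℕ) : ℂ) * (↑π * I / 3) = ↑π * I by push_cast; ring,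
      Complex.exp_pi_mul_I]
  have hcm3 : cm ^ 3 = -1 := by
    rw [hcm, ← Complex.exp_nat_mul,
      show ((3 : ℕ) : ℂ) * (-(↑π * I) / 3) = -(↑π * I) by push_cast; ring,
      Complex.exp_neg, Complex.exp_pi_mul_I]
    norm_num
  have hcpim : cp.im = Real.sin (π / 3) := by
    have e : cp = Complex.exp (((π / 3 : ℝ) : ℂ) * I) := by
      rw [hcp]; congr 1; push_cast; ring
    rw [e, Complex.exp_ofReal_mul_I_im]
  have hcmim : cm.im = Real.sin (-(π / 3)) := by
    have e : cm = Complex.exp (((-(π / 3) : ℝ) : ℂ) * I) := by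
      rw [hcm]; congr 1; push_cast; ring
    rw [e, Complex.exp_ofReal_mul_I_im]
  have hsin : 0 < Real.sin (π / 3) := Real.sin_pos_of_pos_of_lt_pi (by positivity)
    (by linarith [pi_pos])
  have hcpne : cp ≠ cm := by
    intro hEq
    rw [Complex.ext_iff] at hEq
    rw [hcpim, hcmim, Real.sin_neg] at hEq
    linarith [hEq.2]
  -- Ai 0 ≠ 0 and deriv Ai 0 ≠ 0
  have hG23 : Complex.Gamma (2 / 3) ≠ 0 := by
    have : Complex.Gamma (2 / 3) = ((Real.Gamma (2 / 3) : ℝ) : ℂ) := by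
      rw [← Complex.Gamma_ofReal]; norm_num
    rw [this]
    exact_mod_cast (Real.Gamma_pos_of_pos (by norm_num)).ne'
  have hG13 : Complex.Gamma (1 / 3) ≠ 0 := by
    have : Complex.Gamma (1 / 3) = ((Real.Gamma (1 / 3) : ℝ) : ℂ) := by
      rw [← Complex.Gamma_ofReal]; norm_num
    rw [this]
    exact_mod_cast (Real.Gamma_pos_of_pos (by norm_num)).ne'
  have hp23 : (3 : ℂ) ^ ((2 : ℂ) / 3) ≠ 0 := by
    simp [Complex.cpow_eq_zero_iff]
  have hp13 : (3 : ℂ) ^ ((1 : ℂ) / 3) ≠ 0 := by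
    simp [Complex.cpow_eq_zero_iff]
  have hAi0 : Ai 0 ≠ 0 := by
    rw [h0]
    exact one_div_ne_zero (mul_ne_zero hp23 hG23)
  have hAi'0 : deriv Ai 0 ≠ 0 := by
    rw [h1]
    exact neg_ne_zero.mpr (one_div_ne_zero (mul_ne_zero hp13 hG13))
  -- hermitian symmetry on the two rays
  have hsym : ∀ ω : ℝ, Ai (cp * ω) = (starRingEnd ℂ) (Ai (cm * ω)) := by
    intro ω
    have h := airy_conj hIs (cm * ω)
    rw [map_mul, hconj_cm, Complex.conj_ofReal] at h
    exact h
  -- derivative helpers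
  have hu : ∀ (f : ℂ → ℂ), Differentiable ℂ f → ∀ (c : ℂ) (ω : ℝ),
      HasDerivAt (fun t : ℝ => f (c * t)) (c * deriv f (c * ω)) ω := by
    intro f hf c ω
    have hlin : HasDerivAt (fun z : ℂ => c * z) (c * 1) (ω : ℂ) :=
      (hasDerivAt_id ((ω : ℂ))).const_mul c
    have h2 : HasDerivAt f (deriv f (c * (ω : ℂ))) ((fun z : ℂ => c * z) (ω : ℂ)) :=
      (hf (c * (ω : ℂ))).hasDerivAt
    have h3 := (h2.comp ((ω : ℂ)) hlin).comp_ofReal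
    simpa [mul_comm, mul_one, Function.comp_def] using h3
  -- the Wronskian
  obtain ⟨W, hW⟩ : ∃ W : ℝ → ℂ, W = fun ω : ℝ =>
      Ai (cm * ω) * (cp * deriv Ai (cp * ω)) - cm * deriv Ai (cm * ω) * Ai (cp * ω) := ⟨_, rfl⟩
  have hWd : ∀ ω : ℝ, HasDerivAt W 0 ω := by
    intro ω
    have hder := ((hu Ai hd1 cm ω).mul ((hu (deriv Ai) hd2 cp ω).const_mul cp)).sub
      (((hu (deriv Ai) hd2 cm ω).const_mul cm).mul (hu Ai hd1 cp ω))
    rw [hW]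
    refine hder.congr_deriv (Eq.symm ?_)
    rw [hode, hode]
    linear_combination (-(ω : ℂ) * Ai (cm * ω) * Ai (cp * ω)) * hcp3 +
      ((ω : ℂ) * Ai (cm * ω) * Ai (cp * ω)) * hcm3
  have hWconst : ∀ ω : ℝ, W ω = W 0 :=
    fun ω => is_const_of_deriv_eq_zero (fun x => (hWd x).differentiableAt)
      (fun x => (hWd x).deriv) ω 0
  have hW0 : W 0 = Ai 0 * deriv Ai 0 * (cp - cm) := by
    simp only [hW, Complex.ofReal_zero, mul_zero]
    ring
  have hW0ne : W 0 ≠ 0 := by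
    rw [hW0]
    exact mul_ne_zero (mul_ne_zero hAi0 hAi'0) (sub_ne_zero.mpr hcpne)
  -- non-vanishing
  have hnvm : ∀ ω : ℝ, Ai (cm * ω) ≠ 0 := by
    intro ω h
    have hv : Ai (cp * ω) = 0 := by rw [hsym ω, h, map_zero]
    have hzero : W ω = 0 := by simp only [hW, h, hv]; ring
    exact hW0ne ((hWconst ω) ▸ hzero)
  have hnvp : ∀ ω : ℝ, Ai (cp * ω) ≠ 0 := by
    intro ω h
    exact hnvm ω (by
      have h2 := hsym ω
      rw [h] at h2
      simpa using h2.symm)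
  have hden : ∀ ω : ℝ, cm * Ai (cm * ω) ≠ 0 := fun ω => mul_ne_zero hcm0 (hnvm ω)
  -- the unimodular ratio h
  obtain ⟨h, hhdef⟩ : ∃ h : ℝ → ℂ,
      h = fun ω : ℝ => cp * Ai (cp * ω) / (cm * Ai (cm * ω)) := ⟨_, rfl⟩
  have hhval : ∀ ω : ℝ, h ω = cp * Ai (cp * ω) / (cm * Ai (cm * ω)) := by
    intro ω; rw [hhdef]
  have hhne : ∀ ω : ℝ, h ω ≠ 0 := by
    intro ω
    rw [hhval ω]
    exact div_ne_zero (mul_ne_zero hcp0 (hnvp ω)) (hden ω)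
  have hconjh : ∀ ω : ℝ, h ω * (starRingEnd ℂ) (h ω) = 1 := by
    intro ω
    have h2 : (starRingEnd ℂ) (Ai (cp * ω)) = Ai (cm * ω) := by
      rw [hsym ω, Complex.conj_conj]
    have h3 : (starRingEnd ℂ) (h ω) = cm * Ai (cm * ω) / (cp * Ai (cp * ω)) := by
      rw [hhval ω, map_div₀, map_mul, map_mul, hconj_cp, hconj_cm, h2, ← hsym ω]
    rw [h3, hhval ω, div_mul_div_comm,
      div_eq_one_iff_eq (mul_ne_zero (hden ω) (mul_ne_zero hcp0 (hnvp ω)))]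
    ring
  -- analyticity of h
  have hray : ∀ c : ℂ, ∀ ω : ℝ, AnalyticAt ℝ (fun ω : ℝ => Ai (c * ω)) ω := by
    intro c ω
    have hlin : AnalyticAt ℝ (fun ω : ℝ => c * (ω : ℂ)) ω :=
      analyticAt_const.mul (Complex.ofRealCLM.analyticAt ω)
    have := AnalyticAt.comp (g := Ai) (f := fun ω : ℝ => c * (ω : ℂ)) (x := ω)
      ((hd1.analyticAt (c * (ω : ℂ))).restrictScalars (𝕜 := ℝ)) hlin
    simpa [Function.comp_def] using this
  have hhan : AnalyticOnNhd ℝ h Set.univ := by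
    intro ω _
    rw [hhdef]
    exact (analyticAt_const.mul (hray cp ω)).div
      (analyticAt_const.mul (hray cm ω)) (hden ω)
  have hhdiff : ∀ ω : ℝ, HasDerivAt h (deriv h ω) ω :=
    fun ω => ((hhan ω trivial).differentiableAt).hasDerivAt
  have hhcont : Continuous h :=
    continuous_iff_continuousAt.mpr fun ω => (hhan ω trivial).continuousAt
  have hdhcont : Continuous (deriv h) :=
    continuous_iff_continuousAt.mpr fun ω => ((hhan.deriv) ω trivial).continuousAt
  -- the realness of -I * h' * conj h
  have hprod : ∀ ω : ℝ,
      deriv h ω * (starRingEnd ℂ) (h ω) + h ω * (starRingEnd ℂ) (deriv h ω) = 0 := by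
    intro ω
    have hs := (hhdiff ω).mul ((hhdiff ω).star)
    have hcst : (fun ω : ℝ => h ω * star (h ω)) = fun _ => (1 : ℂ) := by
      funext x
      exact hconjh x
    rw [show (h * fun x => star (h x)) = fun _ => (1 : ℂ) from hcst] at hs
    have h6 := hs.unique (hasDerivAt_const ω 1)
    exact h6
  obtain ⟨gR, hgRdef⟩ : ∃ gR : ℝ → ℝ,
      gR = fun ω : ℝ => (-I * deriv h ω * (starRingEnd ℂ) (h ω)).re := ⟨_, rfl⟩
  have hgR : ∀ ω : ℝ, ((gR ω : ℝ) : ℂ) = -I * deriv h ω * (starRingEnd ℂ) (h ω) := by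
    intro ω
    have hcc : (starRingEnd ℂ) (-I * deriv h ω * (starRingEnd ℂ) (h ω)) =
        -I * deriv h ω * (starRingEnd ℂ) (h ω) := by
      simp only [map_mul, map_neg, Complex.conj_I, Complex.conj_conj, neg_neg]
      linear_combination I * hprod ω
    have h4 := Complex.conj_eq_iff_re.mp hcc
    rw [hgRdef]
    exact h4
  have hgRcont : Continuous gR := by
    rw [hgRdef]
    exact Complex.continuous_re.comp
      (((continuous_const.mul hdhcont).mul (Complex.continuous_conj.comp hhcont)))
  -- the angle function
  obtain ⟨θ, hθdef⟩ : ∃ θ : ℝ → ℝ,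
      θ = fun ω : ℝ => 2 * π / 3 + ∫ t in (0:ℝ)..ω, gR t := ⟨_, rfl⟩
  have hθd : ∀ ω : ℝ, HasDerivAt θ (gR ω) ω := by
    intro ω
    rw [hθdef]
    exact ((hgRcont.integral_hasStrictDerivAt 0 ω).hasDerivAt).const_add (2 * π / 3)
  have hθ0 : θ 0 = 2 * π / 3 := by
    rw [hθdef]
    simp
  have hθcont : Continuous θ :=
    continuous_iff_continuousAt.mpr fun ω => (hθd ω).differentiableAt.continuousAt
  -- h = exp(I θ)
  have hFd : ∀ ω : ℝ,
      HasDerivAt (fun ω : ℝ => h ω * Complex.exp (-(I * (θ ω : ℂ)))) 0 ω := by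
    intro ω
    have hθC : HasDerivAt (fun ω : ℝ => ((θ ω : ℝ) : ℂ)) ((gR ω : ℝ) : ℂ) ω :=
      (hθd ω).ofReal_comp
    have hin : HasDerivAt (fun ω : ℝ => -(I * ((θ ω : ℝ) : ℂ))) (-(I * (gR ω : ℂ))) ω :=
      (hθC.const_mul I).neg
    have hexp := hin.cexp
    have hmul := (hhdiff ω).mul hexp
    refine hmul.congr_deriv (Eq.symm ?_)
    rw [hgR ω]
    have e1 := hconjh ω
    linear_combination (deriv h ω * Complex.exp (-(I * ((θ ω : ℝ) : ℂ)))) * e1 -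
      (deriv h ω * (starRingEnd ℂ) (h ω) * h ω * Complex.exp (-(I * ((θ ω : ℝ) : ℂ)))) *
        Complex.I_mul_I
  have hFconst : ∀ ω : ℝ,
      h ω * Complex.exp (-(I * (θ ω : ℂ))) = h 0 * Complex.exp (-(I * (θ 0 : ℂ))) :=
    fun ω => is_const_of_deriv_eq_zero (fun x => (hFd x).differentiableAt)
      (fun x => (hFd x).deriv) ω 0
  have hF0 : h 0 * Complex.exp (-(I * (θ 0 : ℂ))) = 1 := by
    rw [hθ0, hhval 0]
    simp only [Complex.ofReal_zero, mul_zero]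
    rw [div_mul_eq_mul_div, div_eq_one_iff_eq (mul_ne_zero hcm0 hAi0)]
    have key : cp * Complex.exp (-(I * ((2 * π / 3 : ℝ) : ℂ))) = cm := by
      rw [hcp, hcm, ← Complex.exp_add]
      congr 1
      push_cast
      ring
    push_cast at key ⊢
    linear_combination Ai 0 * key
  have hexpθ : ∀ ω : ℝ, h ω = Complex.exp (I * (θ ω : ℂ)) := by
    intro ω
    have hF := hFconst ω
    rw [hF0] at hF
    rw [Complex.exp_neg] at hF
    rwa [mul_inv_eq_one₀ (Complex.exp_ne_zero _)] at hF
  -- analyticity of θ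
  have hθan : AnalyticOnNhd ℝ θ Set.univ := by
    intro ω₀ _
    obtain ⟨q, hqdef⟩ : ∃ q : ℝ → ℂ, q = fun ω : ℝ => h ω * (h ω₀)⁻¹ := ⟨_, rfl⟩
    have hqval : ∀ ω, q ω = h ω * (h ω₀)⁻¹ := fun ω => by rw [hqdef]
    have hq0 : ∀ ω, q ω ≠ 0 := fun ω => by
      rw [hqval ω]; exact mul_ne_zero (hhne ω) (inv_ne_zero (hhne ω₀))
    have hq1 : q ω₀ = 1 := by rw [hqval ω₀]; exact mul_inv_cancel₀ (hhne ω₀)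
    have hqan : AnalyticAt ℝ q ω₀ := by
      rw [hqdef]; exact (hhan ω₀ trivial).mul analyticAt_const
    have hlog : AnalyticAt ℝ (fun ω : ℝ => Complex.log (q ω)) ω₀ := by
      have hl : AnalyticAt ℂ Complex.log (q ω₀) :=
        analyticAt_clog (by rw [hq1]; exact Complex.one_mem_slitPlane)
      exact (hl.restrictScalars (𝕜 := ℝ)).comp hqan
    have hm : AnalyticAt ℝ
        (fun ω : ℝ => θ ω₀ + (-I * Complex.log (q ω)).re) ω₀ := by
      have hre : AnalyticAt ℝ (fun ω : ℝ => -I * Complex.log (q ω)) ω₀ :=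
        analyticAt_const.mul hlog
      have := AnalyticAt.comp (g := fun z : ℂ => z.re)
        (f := fun ω : ℝ => -I * Complex.log (q ω)) (x := ω₀)
        (Complex.reCLM.analyticAt (-I * Complex.log (q ω₀))) hre
      exact analyticAt_const.add (by simpa [Function.comp_def] using this)
    refine hm.congr ?_
    have hlc : ContinuousAt (fun ω : ℝ => Complex.log (q ω)) ω₀ :=
      ContinuousAt.clog hqan.continuousAt (by rw [hq1]; exact Complex.one_mem_slitPlane)
    have hdcont : ContinuousAt
        (fun ω : ℝ => θ ω - θ ω₀ - (-I * Complex.log (q ω)).re) ω₀ :=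
      ((hθcont.continuousAt.sub continuousAt_const).sub
        (Complex.continuous_re.continuousAt.comp (continuousAt_const.mul hlc)))
    have hsmall : ∀ᶠ ω in nhds ω₀,
        (θ ω - θ ω₀ - (-I * Complex.log (q ω)).re) ∈ Set.Ioo (-π) π := by
      apply hdcont.eventually_mem
      have hdval : θ ω₀ - θ ω₀ - (-I * Complex.log (q ω₀)).re = 0 := by
        rw [hq1, Complex.log_one]
        simp
      rw [hdval]
      exact isOpen_Ioo.mem_nhds (by constructor <;> simp [pi_pos] <;> linarith [pi_pos])
    filter_upwards [hsmall] with ω hsω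
    -- show θ ω₀ + re (-I log q ω) = θ ω
    have hqe : Complex.exp (I * ((θ ω : ℝ) : ℂ) - I * ((θ ω₀ : ℝ) : ℂ)) = q ω := by
      rw [Complex.exp_sub, ← hexpθ, ← hexpθ, hqval ω, div_eq_mul_inv]
    have hone : Complex.exp (I * ((θ ω : ℝ) : ℂ) - I * ((θ ω₀ : ℝ) : ℂ)
        - Complex.log (q ω)) = 1 := by
      rw [Complex.exp_sub, hqe, Complex.exp_log (hq0 ω), div_self (hq0 ω)]
    obtain ⟨k, hk⟩ := Complex.exp_eq_one_iff.mp hone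
    have hre : -I * Complex.log (q ω) =
        ((θ ω : ℝ) : ℂ) - ((θ ω₀ : ℝ) : ℂ) - 2 * π * k := by
      have hL : Complex.log (q ω) =
          I * (((θ ω : ℝ) : ℂ) - ((θ ω₀ : ℝ) : ℂ) - 2 * π * k) := by
        linear_combination -hk
      rw [hL]
      linear_combination (-(((θ ω : ℝ) : ℂ) - ((θ ω₀ : ℝ) : ℂ) - 2 * π * k)) * Complex.I_mul_I
    have hre2 : (-I * Complex.log (q ω)).re = θ ω - θ ω₀ - 2 * π * k := by
      rw [hre]
      push_cast
      simp
    rw [hre2] at hsω ⊢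
    have hk0 : k = 0 := by
      rcases hsω with ⟨hlo, hhi⟩
      by_contra hkne
      have h1le : (1 : ℝ) ≤ |(k : ℝ)| := by
        exact_mod_cast Int.one_le_abs (by exact_mod_cast hkne)
      rcases abs_cases (k : ℝ) with ⟨he, _⟩ | ⟨he, _⟩ <;> nlinarith [pi_pos]
    rw [hk0]
    push_cast
    ring
  -- conclusion
  refine ⟨fun ω => π - θ ω, fun ω _ => analyticAt_const.sub (hθan ω trivial), ?_, ?_⟩
  · show π - θ 0 = π / 3
    rw [hθ0]; ring
  · intro ω
    have hhω := hexpθ ω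
    rw [show (I * ((π : ℝ) - ((π - θ ω : ℝ) : ℂ))) = I * (θ ω : ℂ) by push_cast; ring]
    rw [← hhω, hhval ω]
    rw [mul_comm (cm * Ai (cm * (ω : ℂ))), div_mul_cancel₀ _ (hden ω)]
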